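/- With θ_k = i^k α^{1/4} + c/(i^k α^{1/4}) as above, one has θ_k + θ_{k+1} = i^k β^{1/4} + 2c/(i^k β^{1/4}) where β = −4α and β^{1/4} = (1+i)α^{1/4}; in particular the sums of adjacent θ's are the roots of (θ² − 4c)² = −8a + 8c², exhibiting the 'mirror' quartic with Kummer datum (−4α, 2c). -/

import Mathlib

/-- with `θ_k = i^k α^{1/4} + c/(i^k α^{1/4})` as in the previous statement,
one has `θ_k + θ_{k+1} = i^k β^{1/4} + 2c/(i^k β^{1/4})` where `β = −4α` and
`β^{1/4} = (1+i) α^{1/4}`; in particular the sums of adjacent `θ`'s are precisely the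
roots of `(θ² − 4c)² = −8a + 8c²`, exhibiting the mirror quartic with Kummer datum
`(−4α, 2c)`. -/
theorem stmt17 (F : Type*) [Field F] (h2 : (2 : F) ≠ 0)
    (D a b c : F) (s : F) (hs : s ^ 2 = -D)
    (hN : a ^ 2 + D * b ^ 2 = c ^ 4)
    (r : F) (hr : r ^ 4 = a + b * s) (hr0 : r ≠ 0)
    (i : F) (hi : i ^ 2 = -1)
    (θ : Fin 4 → F) (hθ : ∀ k : Fin 4, θ k = i ^ (k : ℕ) * r + c / (i ^ (k : ℕ) * r)) :
    (((1 + i) * r) ^ 4 = -4 * (a + b * s)) ∧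
    (∀ k : Fin 4, θ k + θ (k + 1) =
      i ^ (k : ℕ) * ((1 + i) * r) + 2 * c / (i ^ (k : ℕ) * ((1 + i) * r))) ∧
    (∀ x : F, (x ^ 2 - 4 * c) ^ 2 = -8 * a + 8 * c ^ 2 ↔
      ∃ k : Fin 4, x = θ k + θ (k + 1)) := by
  have hi0 : i ≠ 0 := by
    intro h; rw [h] at hi; simp at hi
  have h1i : (1 + i) ≠ 0 := by
    intro h; exact h2 (by linear_combination (1 - i) * h + hi)
  have hu : (1 + i) * r ≠ 0 := mul_ne_zero h1i hr0
  have part1 : ((1 + i) * r) ^ 4 = -4 * (a + b * s) := by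
    linear_combination (i ^ 2 + 4 * i + 5) * r ^ 4 * hi + (-4) * hr
  have hc4 : c ^ 4 = r ^ 4 * (2 * a - r ^ 4) := by
    linear_combination (r ^ 4 + b * s - a) * hr + b ^ 2 * hs - hN
  have part2 : ∀ k : Fin 4, θ k + θ (k + 1) =
      i ^ (k : ℕ) * ((1 + i) * r) + 2 * c / (i ^ (k : ℕ) * ((1 + i) * r)) := by
    intro k
    fin_cases k
    · simp [hθ]; field_simp; linear_combination c*hi
    · simp [hθ]; field_simp; linear_combination c*hi
    · simp [hθ, show ((3:Fin 4):ℕ) = 3 from rfl]; field_simp; linear_combination c*hi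
    · simp [hθ, show ((3:Fin 4):ℕ) = 3 from rfl]; field_simp
      linear_combination (i*c + c*(i^2-1) - i^3*r^2*(i^2-1) - i^4*r^2*(i^2-1))*hi
  refine ⟨part1, part2, ?_⟩
  intro x
  set u := (1 + i) * r with hudef
  have hu4 : u ^ 4 = -4 * r ^ 4 := by rw [hudef]; linear_combination part1 + 4 * hr
  have hiu : i * u ≠ 0 := mul_ne_zero hi0 hu
  have hi4 : i ^ 4 = 1 := by linear_combination (i^2 - 1) * hi
  have key : ∀ t : F, t ≠ 0 → t ^ 4 = -4 * r ^ 4 →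
      ((t + 2 * c / t) ^ 2 - 4 * c) ^ 2 = -8 * a + 8 * c ^ 2 := by
    intro t ht ht4
    field_simp
    linear_combination (t^4 - 4*r^4 + 8*a)*ht4 + 16*hc4
  constructor
  · intro hx
    have hσ0 : θ 0 + θ (0 + 1) = u + 2 * c / u := by
      have := part2 0; simpa using this
    have hσ1 : θ 1 + θ (1 + 1) = i * u + 2 * c / (i * u) := by
      have := part2 1; simpa using this
    have hσ2 : θ 2 + θ (2 + 1) = -(u + 2 * c / u) := by
      rw [part2 2]
      simp only [show ((2:Fin 4):ℕ) = 2 from rfl]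
      field_simp
      linear_combination (i^2*r^2*(1+i)^2 + 2*c)*hi
    have hσ3 : θ 3 + θ (3 + 1) = -(i * u + 2 * c / (i * u)) := by
      rw [part2 3]
      simp only [show ((3:Fin 4):ℕ) = 3 from rfl]
      field_simp
      linear_combination (i^4*r^2*(1+i)^2 + 2*c)*hi
    have hs0 : (u + 2 * c / u) ^ 2 + (i * u + 2 * c / (i * u)) ^ 2 = 8 * c := by
      field_simp
      linear_combination (i^2*r^4*(1+i)^4 + 4*c^2)*hi
    have hs1 : (u + 2 * c / u) ^ 2 * (i * u + 2 * c / (i * u)) ^ 2 = 8 * c ^ 2 + 8 * a := by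
      field_simp
      linear_combination (u^8*(i^2-1) - 8*a*u^4 + 4*c*i^2*u^6 + 16*c^3*u^2 + 4*c^2*u^4*(1+i^2))*hi
        + (u^4 - 4*r^4 + 8*a)*hu4 + 16*hc4
    have heq : (x ^ 2 - 4 * c) ^ 2 - (-8 * a + 8 * c ^ 2) =
        (x ^ 2 - (u + 2 * c / u) ^ 2) * (x ^ 2 - (i * u + 2 * c / (i * u)) ^ 2) := by
      linear_combination x ^ 2 * hs0 - hs1
    have h0 : (x ^ 2 - (u + 2 * c / u) ^ 2) * (x ^ 2 - (i * u + 2 * c / (i * u)) ^ 2) = 0 := by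
      rw [← heq]; linear_combination hx
    rcases mul_eq_zero.1 h0 with h | h
    · rcases mul_eq_zero.1 (show (x - (u + 2 * c / u)) * (x + (u + 2 * c / u)) = 0 by
        linear_combination h) with h' | h'
      · exact ⟨0, by rw [hσ0]; linear_combination h'⟩
      · exact ⟨2, by rw [hσ2]; linear_combination h'⟩
    · rcases mul_eq_zero.1 (show (x - (i * u + 2 * c / (i * u))) * (x + (i * u + 2 * c / (i * u))) = 0 by
        linear_combination h) with h' | h'
      · exact ⟨1, by rw [hσ1]; linear_combination h'⟩
      · exact ⟨3, by rw [hσ3]; linear_combination h'⟩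
  · rintro ⟨k, rfl⟩
    rw [part2 k]
    apply key
    · exact mul_ne_zero (pow_ne_zero _ hi0) hu
    · have hik : (i ^ (k : ℕ)) ^ 4 = 1 := by
        rw [← pow_mul, mul_comm, pow_mul, hi4, one_pow]
      rw [mul_pow, hik, one_mul, hu4]
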